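/- Let F : X × Y × Z → F with |X| = |Y| = |Z| = k and triangle rank at most k. Then for all n ≥ 1, the slice rank of the n-th tensor power F^{⊗n} : X^n × Y^n × Z^n → F is at most 3 times the number of tuples a ∈ {0,…,k−1}^n with Σ_i a_i ≤ (k−1)n/3. -/

import Mathlib

open Finset

/-- A slice term is a function of three variables that factors as a
function of two of the variables times a function of the remaining one. -/
def IsSliceTerm {X Y Z 𝔽 : Type*} [Field 𝔽] (t : X → Y → Z → 𝔽) : Prop :=
  (∃ (f : X → Y → 𝔽) (g : Z → 𝔽), ∀ x y z, t x y z = f x y * g z) ∨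
  (∃ (f : X → Z → 𝔽) (g : Y → 𝔽), ∀ x y z, t x y z = f x z * g y) ∨
  (∃ (f : Y → Z → 𝔽) (g : X → 𝔽), ∀ x y z, t x y z = f y z * g x)

/-- The slice rank of a function `X × Y × Z → 𝔽`: the least number of slice
terms needed to express it. -/
noncomputable def sliceRank {X Y Z 𝔽 : Type*} [Field 𝔽] (T : X → Y → Z → 𝔽) : ℕ :=
  sInf {k | ∃ t : Fin k → X → Y → Z → 𝔽,
    (∀ i, IsSliceTerm (t i)) ∧ ∀ x y z, T x y z = ∑ i, t i x y z}

/-- The tensor rank of a function `X × Y × Z → 𝔽`. -/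
noncomputable def tensorRank {X Y Z 𝔽 : Type*} [Field 𝔽] (T : X → Y → Z → 𝔽) : ℕ :=
  sInf {k | ∃ (f : Fin k → X → 𝔽) (g : Fin k → Y → 𝔽) (h : Fin k → Z → 𝔽),
    ∀ x y z, T x y z = ∑ i, f i x * g i y * h i z}

/-- The triangle rank of a function `X × Y × Z → 𝔽`. -/
noncomputable def triangleRank {X Y Z 𝔽 : Type*} [Field 𝔽] (T : X → Y → Z → 𝔽) : ℕ :=
  sInf {k | ∃ (f : Fin k → X → 𝔽) (g : Fin k → Y → 𝔽) (h : Fin k → Z → 𝔽)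
      (r : Fin k → Fin k → Fin k → 𝔽),
    ∀ x y z, T x y z = ∑ a : Fin k, ∑ b : Fin k, ∑ c : Fin k,
      if (a : ℕ) + (b : ℕ) + (c : ℕ) < k then r a b c * f a x * g b y * h c z else 0}


set_option linter.unnecessarySimpa false
set_option linter.unusedVariables false

lemma sliceRank_le_card' {X Y Z 𝔽 : Type*} [Field 𝔽] {ι : Type*} [Fintype ι]
    (T : X → Y → Z → 𝔽) (t : ι → X → Y → Z → 𝔽)
    (ht : ∀ i, IsSliceTerm (t i)) (hT : ∀ x y z, T x y z = ∑ i, t i x y z) :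
    sliceRank T ≤ Fintype.card ι := by
  apply Nat.sInf_le
  exact ⟨fun j => t ((Fintype.equivFin ι).symm j), fun j => ht _, fun x y z => by
    rw [hT]; exact Fintype.sum_equiv (Fintype.equivFin ι) _ _ (fun i => by simp)⟩


lemma triangle_set_nonempty_aux {X Y Z 𝔽 : Type*} [Fintype X] [Fintype Y] [Fintype Z] [Field 𝔽]
    (F : X → Y → Z → 𝔽) {k : ℕ}
    (hX : Fintype.card X = k) (hY : Fintype.card Y = k) (hZ : Fintype.card Z = k) :
    {m | ∃ (f : Fin m → X → 𝔽) (g : Fin m → Y → 𝔽) (h : Fin m → Z → 𝔽)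
      (r : Fin m → Fin m → Fin m → 𝔽),
    ∀ x y z, F x y z = ∑ a : Fin m, ∑ b : Fin m, ∑ c : Fin m,
      if (a : ℕ) + (b : ℕ) + (c : ℕ) < m then r a b c * f a x * g b y * h c z else 0}.Nonempty := by
  rcases Nat.eq_zero_or_pos k with hk0 | hk
  · have hXe : IsEmpty X := Fintype.card_eq_zero_iff.mp (hX.trans hk0)
    exact ⟨0, Fin.elim0, Fin.elim0, Fin.elim0, Fin.elim0, fun x => isEmptyElim x⟩
  · set m := 3 * k - 2 with hm
    have hkm : k ≤ m := by omega
    let eX := Fintype.equivFinOfCardEq hX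
    let eY := Fintype.equivFinOfCardEq hY
    let eZ := Fintype.equivFinOfCardEq hZ
    refine ⟨m, fun a x => if (a : ℕ) = (eX x : ℕ) then 1 else 0,
      fun b y => if (b : ℕ) = (eY y : ℕ) then 1 else 0,
      fun c z => if (c : ℕ) = (eZ z : ℕ) then 1 else 0,
      fun a b c => if h : (a:ℕ) < k ∧ (b:ℕ) < k ∧ (c:ℕ) < k
        then F (eX.symm ⟨a, h.1⟩) (eY.symm ⟨b, h.2.1⟩) (eZ.symm ⟨c, h.2.2⟩) else 0,
      fun x y z => ?_⟩
    rw [Fintype.sum_eq_single ((eX x).castLE hkm)]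
    · rw [Fintype.sum_eq_single ((eY y).castLE hkm)]
      · rw [Fintype.sum_eq_single ((eZ z).castLE hkm)]
        · have hcond : ((eX x).castLE hkm : ℕ) + ((eY y).castLE hkm : ℕ) + ((eZ z).castLE hkm : ℕ) < m := by
            have h1 := (eX x).isLt; have h2 := (eY y).isLt; have h3 := (eZ z).isLt
            simp only [Fin.coe_castLE]; omega
          beta_reduce
          rw [if_pos hcond]
          rw [dif_pos ⟨by simpa using (eX x).isLt, by simpa using (eY y).isLt, by simpa using (eZ z).isLt⟩]
          simp
        · intro c hc
          have : ((c : ℕ) = (eZ z : ℕ)) = False := by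
            simp only [eq_iff_iff, iff_false]
            intro hcc
            apply hc
            apply Fin.ext
            simpa using hcc
          simp [this]
      · intro b hb
        have : ((b : ℕ) = (eY y : ℕ)) = False := by
          simp only [eq_iff_iff, iff_false]
          intro hcc; apply hb; apply Fin.ext; simpa using hcc
        simp [this]
    · intro a ha
      have : ((a : ℕ) = (eX x : ℕ)) = False := by
        simp only [eq_iff_iff, iff_false]
        intro hcc; apply ha; apply Fin.ext; simpa using hcc
      simp [this]

lemma tensor_expand_aux {X Y Z 𝔽 : Type*} [Field 𝔽] {m n : ℕ}
    (f : Fin m → X → 𝔽) (g : Fin m → Y → 𝔽) (h : Fin m → Z → 𝔽)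
    (r : Fin m → Fin m → Fin m → 𝔽) (F : X → Y → Z → 𝔽)
    (hrep : ∀ x y z, F x y z = ∑ a : Fin m, ∑ b : Fin m, ∑ c : Fin m,
        if (a:ℕ)+(b:ℕ)+(c:ℕ) < m then r a b c * f a x * g b y * h c z else 0)
    (x : Fin n → X) (y : Fin n → Y) (z : Fin n → Z) :
    (∏ i, F (x i) (y i) (z i)) =
      ∑ a : Fin n → Fin m, ∑ b : Fin n → Fin m, ∑ c : Fin n → Fin m,
        (∏ i, if (a i : ℕ)+(b i : ℕ)+(c i : ℕ) < m then r (a i) (b i) (c i) else 0)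
          * (∏ i, f (a i) (x i)) * (∏ i, g (b i) (y i)) * (∏ i, h (c i) (z i)) := by
  set ψ : Fin n → (Fin m × Fin m × Fin m) → 𝔽 := fun i p =>
    if (p.1:ℕ)+(p.2.1:ℕ)+(p.2.2:ℕ) < m
      then r p.1 p.2.1 p.2.2 * f p.1 (x i) * g p.2.1 (y i) * h p.2.2 (z i) else 0 with hψ
  have h1 : ∀ i, F (x i) (y i) (z i) = ∑ p : Fin m × Fin m × Fin m, ψ i p := by
    intro i
    rw [hrep, Fintype.sum_prod_type]
    exact Finset.sum_congr rfl fun a _ => by rw [Fintype.sum_prod_type]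
  have h2 : (∏ i, F (x i) (y i) (z i)) = ∑ P : Fin n → Fin m × Fin m × Fin m, ∏ i, ψ i (P i) := by
    simp_rw [h1]
    rw [Finset.prod_univ_sum]
    rw [Fintype.piFinset_univ]
  rw [h2]
  let E : ((Fin n → Fin m) × (Fin n → Fin m) × (Fin n → Fin m)) ≃ (Fin n → Fin m × Fin m × Fin m) :=
    ⟨fun t i => (t.1 i, t.2.1 i, t.2.2 i),
     fun P => (fun i => (P i).1, fun i => (P i).2.1, fun i => (P i).2.2),
     fun t => rfl, fun P => rfl⟩
  rw [← Fintype.sum_equiv E (fun q => ∏ i, ψ i (E q i)) (fun P => ∏ i, ψ i (P i)) (fun q => rfl)]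
  rw [Fintype.sum_prod_type]
  refine Finset.sum_congr rfl fun a _ => ?_
  rw [Fintype.sum_prod_type]
  refine Finset.sum_congr rfl fun b _ => ?_
  refine Finset.sum_congr rfl fun c _ => ?_
  have key : ∀ i, ψ i (E (a, b, c) i) =
      (if (a i : ℕ)+(b i : ℕ)+(c i : ℕ) < m then r (a i) (b i) (c i) else 0)
        * f (a i) (x i) * g (b i) (y i) * h (c i) (z i) := by
    intro i
    simp only [hψ, E, Equiv.coe_fn_mk]
    split_ifs <;> ring
  simp_rw [key]
  rw [Finset.prod_mul_distrib, Finset.prod_mul_distrib, Finset.prod_mul_distrib]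

theorem sliceRank_tensorPow_le {X Y Z 𝔽 : Type*} [Fintype X] [Fintype Y]
    [Fintype Z] [Field 𝔽] (F : X → Y → Z → 𝔽) (k n : ℕ) (hn : 1 ≤ n)
    (hX : Fintype.card X = k) (hY : Fintype.card Y = k) (hZ : Fintype.card Z = k)
    (hF : triangleRank F ≤ k) :
    sliceRank (fun (x : Fin n → X) (y : Fin n → Y) (z : Fin n → Z) =>
        ∏ i, F (x i) (y i) (z i)) ≤
      3 * (Finset.univ.filter fun a : Fin n → Fin k =>
        3 * ∑ i, (a i : ℕ) ≤ (k - 1) * n).card := by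
  have hne := triangle_set_nonempty_aux F hX hY hZ
  have hmem := Nat.sInf_mem hne
  set m := triangleRank F with hmdef
  have hmk : m ≤ k := hF
  obtain ⟨f, g, h, r, hrep⟩ : m ∈ _ := hmem
  -- abbreviations
  set co : (Fin n → Fin m) → (Fin n → Fin m) → (Fin n → Fin m) → 𝔽 := fun a b c =>
    ∏ i, if (a i : ℕ)+(b i : ℕ)+(c i : ℕ) < m then r (a i) (b i) (c i) else 0 with hco
  set Fx : (Fin n → Fin m) → (Fin n → X) → 𝔽 := fun a x => ∏ i, f (a i) (x i) with hFx
  set Gy : (Fin n → Fin m) → (Fin n → Y) → 𝔽 := fun b y => ∏ i, g (b i) (y i) with hGy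
  set Hz : (Fin n → Fin m) → (Fin n → Z) → 𝔽 := fun c z => ∏ i, h (c i) (z i) with hHz
  set p : (Fin n → Fin m) → Prop := fun a => 3 * ∑ i, (a i : ℕ) ≤ (k - 1) * n with hp
  have hvanish : ∀ a b c : Fin n → Fin m, ¬ p a → ¬ p b → ¬ p c → co a b c = 0 := by
    intro a b c ha hb hc
    by_contra h0
    have hall : ∀ i, (a i : ℕ) + (b i : ℕ) + (c i : ℕ) < m := by
      intro i
      by_contra hlt
      exact (Finset.prod_ne_zero_iff.mp h0 i (mem_univ i)) (if_neg hlt)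
    have hsum : ∑ i, ((a i : ℕ) + (b i : ℕ) + (c i : ℕ)) ≤ (k - 1) * n := by
      calc ∑ i : Fin n, ((a i : ℕ) + (b i : ℕ) + (c i : ℕ)) ≤ ∑ _i : Fin n, (k - 1) :=
            Finset.sum_le_sum fun i _ => by have := hall i; omega
        _ = (k - 1) * n := by simp [Finset.sum_const, mul_comm]
    rw [Finset.sum_add_distrib, Finset.sum_add_distrib] at hsum
    simp only [hp, not_le] at ha hb hc
    set M := (k - 1) * n
    omega
  set Gm : Finset (Fin n → Fin m) := univ.filter p with hGm
  set Gmc : Finset (Fin n → Fin m) := univ.filter (fun a => ¬ p a) with hGmc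
  set t : (↥Gm ⊕ ↥Gm ⊕ ↥Gm) → (Fin n → X) → (Fin n → Y) → (Fin n → Z) → 𝔽 :=
    Sum.elim
      (fun a x y z => (∑ b : Fin n → Fin m, ∑ c : Fin n → Fin m,
        co ↑a b c * Gy b y * Hz c z) * Fx ↑a x)
      (Sum.elim
        (fun b x y z => (∑ a ∈ Gmc, ∑ c : Fin n → Fin m,
          co a ↑b c * Fx a x * Hz c z) * Gy ↑b y)
        (fun c x y z => (∑ a ∈ Gmc, ∑ b ∈ Gmc,
          co a b ↑c * Fx a x * Gy b y) * Hz ↑c z)) with ht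
  have hterms : ∀ i, IsSliceTerm (t i) := by
    rintro (a | b | c)
    · exact Or.inr (Or.inr ⟨fun y z => ∑ b : Fin n → Fin m, ∑ c : Fin n → Fin m,
        co ↑a b c * Gy b y * Hz c z, fun x => Fx ↑a x, fun x y z => rfl⟩)
    · exact Or.inr (Or.inl ⟨fun x z => ∑ a ∈ Gmc, ∑ c : Fin n → Fin m,
        co a ↑b c * Fx a x * Hz c z, fun y => Gy ↑b y, fun x y z => rfl⟩)
    · exact Or.inl ⟨fun x y => ∑ a ∈ Gmc, ∑ b ∈ Gmc,
        co a b ↑c * Fx a x * Gy b y, fun z => Hz ↑c z, fun x y z => rfl⟩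
  have hdecomp : ∀ x y z, (∏ i, F (x i) (y i) (z i)) = ∑ i, t i x y z := by
    intro x y z
    rw [Fintype.sum_sum_type, Fintype.sum_sum_type]
    simp only [ht, Sum.elim_inl, Sum.elim_inr]
    rw [Finset.sum_coe_sort Gm (fun a => (∑ b : Fin n → Fin m, ∑ c : Fin n → Fin m,
        co a b c * Gy b y * Hz c z) * Fx a x),
      Finset.sum_coe_sort Gm (fun b => (∑ a ∈ Gmc, ∑ c : Fin n → Fin m,
        co a b c * Fx a x * Hz c z) * Gy b y),
      Finset.sum_coe_sort Gm (fun c => (∑ a ∈ Gmc, ∑ b ∈ Gmc,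
        co a b c * Fx a x * Gy b y) * Hz c z)]
    rw [tensor_expand_aux f g h r F hrep x y z]
    have e1 : ∀ x y z, (∑ a : Fin n → Fin m, ∑ b : Fin n → Fin m, ∑ c : Fin n → Fin m,
        co a b c * Fx a x * Gy b y * Hz c z)
        = ∑ a ∈ Gm, (∑ b, ∑ c, co a b c * Gy b y * Hz c z) * Fx a x
          + (∑ b ∈ Gm, (∑ a ∈ Gmc, ∑ c, co a b c * Fx a x * Hz c z) * Gy b y
            + ∑ c ∈ Gm, (∑ a ∈ Gmc, ∑ b ∈ Gmc, co a b c * Fx a x * Gy b y) * Hz c z) := by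
      intro x y z
      rw [← Finset.sum_filter_add_sum_filter_not univ p
        (fun a => ∑ b : Fin n → Fin m, ∑ c : Fin n → Fin m, co a b c * Fx a x * Gy b y * Hz c z)]
      congr 1
      · refine Finset.sum_congr rfl fun a _ => ?_
        rw [Finset.sum_mul]
        refine Finset.sum_congr rfl fun b _ => ?_
        rw [Finset.sum_mul]
        exact Finset.sum_congr rfl fun c _ => by ring
      · rw [Finset.sum_comm]
        rw [← Finset.sum_filter_add_sum_filter_not univ p
          (fun b => ∑ a ∈ Gmc, ∑ c : Fin n → Fin m, co a b c * Fx a x * Gy b y * Hz c z)]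
        congr 1
        · refine Finset.sum_congr rfl fun b _ => ?_
          rw [Finset.sum_mul]
          refine Finset.sum_congr rfl fun a _ => ?_
          rw [Finset.sum_mul]
          exact Finset.sum_congr rfl fun c _ => by ring
        · have swap : (∑ b ∈ Gmc, ∑ a ∈ Gmc, ∑ c : Fin n → Fin m,
              co a b c * Fx a x * Gy b y * Hz c z)
              = ∑ c : Fin n → Fin m, ∑ a ∈ Gmc, ∑ b ∈ Gmc,
                co a b c * Fx a x * Gy b y * Hz c z := by
            calc (∑ b ∈ Gmc, ∑ a ∈ Gmc, ∑ c : Fin n → Fin m,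
                  co a b c * Fx a x * Gy b y * Hz c z)
                = ∑ a ∈ Gmc, ∑ b ∈ Gmc, ∑ c : Fin n → Fin m,
                  co a b c * Fx a x * Gy b y * Hz c z := Finset.sum_comm
              _ = ∑ a ∈ Gmc, ∑ c : Fin n → Fin m, ∑ b ∈ Gmc,
                  co a b c * Fx a x * Gy b y * Hz c z :=
                    Finset.sum_congr rfl fun a _ => Finset.sum_comm
              _ = ∑ c : Fin n → Fin m, ∑ a ∈ Gmc, ∑ b ∈ Gmc,
                  co a b c * Fx a x * Gy b y * Hz c z := Finset.sum_comm
          rw [swap]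
          rw [← Finset.sum_filter_add_sum_filter_not univ p
            (fun c => ∑ a ∈ Gmc, ∑ b ∈ Gmc, co a b c * Fx a x * Gy b y * Hz c z)]
          have hzero : (∑ c ∈ Gmc, ∑ a ∈ Gmc, ∑ b ∈ Gmc,
              co a b c * Fx a x * Gy b y * Hz c z) = 0 := by
            refine Finset.sum_eq_zero fun c hc => Finset.sum_eq_zero fun a ha =>
              Finset.sum_eq_zero fun b hb => ?_
            rw [hvanish a b c (Finset.mem_filter.mp ha).2 (Finset.mem_filter.mp hb).2
              (Finset.mem_filter.mp hc).2]
            ring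
          rw [hzero, add_zero]
          simp only [Finset.sum_mul]
          rfl
    exact e1 x y z
  have hle1 := sliceRank_le_card' _ t hterms hdecomp
  have hcard : Fintype.card (↥Gm ⊕ ↥Gm ⊕ ↥Gm) = 3 * Gm.card := by
    simp [Fintype.card_sum, Fintype.card_coe]; ring
  rw [hcard] at hle1
  refine hle1.trans (Nat.mul_le_mul_left 3 ?_)
  apply Finset.card_le_card_of_injOn (fun a i => (a i).castLE hmk)
  · intro a ha
    simp only [hGm, Finset.mem_filter, Finset.mem_univ, true_and, hp] at ha ⊢
    simpa using ha
  · intro a _ a' _ hfe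
    funext i
    have := congrFun hfe i
    exact Fin.ext (by simpa using congrArg Fin.val this)
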